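/- Fix integers K ≥ 2 and M ≥ 1, a problem instance μ ∈ ℝ^{K×M}, and a constant L ≥ 0. Assume each local best arm k*_m is the unique maximizer of k ↦ μ(k,m) and the global best arm k* is the unique maximizer of k ↦ μ̄_k. Call an instance μ' ∈ ℝ^{K×M} alternative to μ if it is NOT the case that both (for every m and every j ≠ k*_m, μ'(k*_m, m) > μ'(j, m)) and (for every j ≠ k*, (1/M)·∑_m μ'(k*,m) > (1/M)·∑_m μ'(j,m)). Suppose x : [K]×[M] → [0,∞) satisfies ∑_{k=1}^K ∑_{m=1}^M x(k,m)·(μ(k,m) − μ'(k,m))² ≥ 2L for every instance μ' alternative to μ. Then for every (k,m) ∈ [K]×[M], x(k,m) ≥ max{ 2L/Δ_{k,m}², 2L/(M²·Δ_k²) }, and consequently ∑_{k,m} x(k,m) ≥ ∑_{k=1}^K ∑_{m=1}^M max{ 2L/Δ_{k,m}², 2L/(M²·Δ_k²) }. -/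
import Mathlib


/-- Deterministic core of Theorem 3 of the paper: if the weights `x(k,m) ≥ 0` satisfy
the transportation inequality `∑_{k,m} x(k,m)·(μ(k,m) − μ'(k,m))² ≥ 2L` for every
instance `μ'` alternative to `μ` (i.e., whose answer vector differs from that of `μ`),
then each `x(k,m)` is at least `max{2L/Δ_{k,m}², 2L/(M²·Δ_k²)}`, and consequently the
total weight is bounded below by the sum of these maxima. -/
theorem pac_lower_bound_core
    (K M : ℕ) (hK : 2 ≤ K) (hM : 1 ≤ M)
    (μ : Fin K → Fin M → ℝ) (L : ℝ) (hL : 0 ≤ L)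
    (kstarm : Fin M → Fin K)
    (hlocal : ∀ m : Fin M, ∀ j : Fin K, j ≠ kstarm m → μ (kstarm m) m > μ j m)
    (kstar : Fin K)
    (hglobal : ∀ j : Fin K, j ≠ kstar →
      (1 / (M : ℝ)) * ∑ m, μ kstar m > (1 / (M : ℝ)) * ∑ m, μ j m)
    (Δloc : Fin K → Fin M → ℝ)
    (hΔloc : ∀ m : Fin M, ∀ k : Fin K, k ≠ kstarm m →
      Δloc k m = μ (kstarm m) m - μ k m)
    (hΔlocStar : ∀ m : Fin M,
      IsLeast ((fun k => Δloc k m) '' {k | k ≠ kstarm m}) (Δloc (kstarm m) m))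
    (Δglob : Fin K → ℝ)
    (hΔglob : ∀ k : Fin K, k ≠ kstar →
      Δglob k = (1 / (M : ℝ)) * ∑ m, μ kstar m - (1 / (M : ℝ)) * ∑ m, μ k m)
    (hΔglobStar : IsLeast (Δglob '' {k | k ≠ kstar}) (Δglob kstar))
    (x : Fin K → Fin M → ℝ) (hx : ∀ k m, 0 ≤ x k m)
    (hAlt : ∀ μ' : Fin K → Fin M → ℝ,
      ¬ ((∀ m : Fin M, ∀ j : Fin K, j ≠ kstarm m → μ' (kstarm m) m > μ' j m) ∧
         (∀ j : Fin K, j ≠ kstar →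
           (1 / (M : ℝ)) * ∑ m, μ' kstar m > (1 / (M : ℝ)) * ∑ m, μ' j m)) →
      ∑ k, ∑ m, x k m * (μ k m - μ' k m) ^ 2 ≥ 2 * L) :
    (∀ k m, x k m ≥
      max (2 * L / (Δloc k m) ^ 2) (2 * L / ((M : ℝ) ^ 2 * (Δglob k) ^ 2))) ∧
    ∑ k, ∑ m, x k m ≥
      ∑ k, ∑ m, max (2 * L / (Δloc k m) ^ 2) (2 * L / ((M : ℝ) ^ 2 * (Δglob k) ^ 2)) := by
  have hMpos : (0:ℝ) < M := by exact_mod_cast hM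
  have hM0 : (M:ℝ) ≠ 0 := ne_of_gt hMpos
  -- positivity of gaps
  have hΔlocpos : ∀ k m, 0 < Δloc k m := by
    intro k m
    by_cases hk : k = kstarm m
    · obtain ⟨j, hj, hje⟩ := (hΔlocStar m).1
      have hje : Δloc j m = Δloc (kstarm m) m := hje
      subst hk
      rw [← hje, hΔloc m j hj]
      linarith [hlocal m j hj]
    · rw [hΔloc m k hk]
      linarith [hlocal m k hk]
  have hΔglobpos : ∀ k, 0 < Δglob k := by
    intro k
    by_cases hk : k = kstar
    · obtain ⟨j, hj, hje⟩ := hΔglobStar.1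
      subst hk
      rw [← hje, hΔglob j hj]
      linarith [hglobal j hj]
    · rw [hΔglob k hk]
      linarith [hglobal k hk]
  -- single-point perturbation sum
  have sum_eq : ∀ (k : Fin K) (m : Fin M) (c : ℝ),
      ∑ k', ∑ m', x k' m' *
        (μ k' m' - Function.update μ k (Function.update (μ k) m (μ k m - c)) k' m') ^ 2
        = x k m * c ^ 2 := by
    intro k m c
    rw [Finset.sum_eq_single k]
    · rw [Function.update_self, Finset.sum_eq_single m]
      · rw [Function.update_self]; ring_nf
      · intro m' _ hm'; rw [Function.update_of_ne hm']; ring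
      · intro h; exact absurd (Finset.mem_univ m) h
    · intro k' _ hk'; rw [Function.update_of_ne hk']; simp
    · intro h; exact absurd (Finset.mem_univ k) h
  have sumupd : ∀ (k : Fin K) (m : Fin M) (c : ℝ),
      ∑ m', Function.update (μ k) m (μ k m - c) m' = (∑ m', μ k m') - c := by
    intro k m c
    rw [Finset.sum_update_of_mem (Finset.mem_univ m)]
    have h2 := Finset.add_sum_erase Finset.univ (μ k) (Finset.mem_univ m)
    rw [Finset.sdiff_singleton_eq_erase]
    linarith
  -- local bound
  have bound1 : ∀ k m, 2 * L ≤ x k m * (Δloc k m) ^ 2 := by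
    intro k m
    by_cases hk : k = kstarm m
    · obtain ⟨j, hj, hje⟩ := (hΔlocStar m).1
      have hje : Δloc j m = Δloc (kstarm m) m := hje
      subst hk
      have hgap : Δloc (kstarm m) m = μ (kstarm m) m - μ j m := by
        rw [← hje, hΔloc m j hj]
      have := hAlt (Function.update μ (kstarm m) (Function.update (μ (kstarm m)) m
          (μ (kstarm m) m - Δloc (kstarm m) m))) (by
        rintro ⟨hA, -⟩
        have h1 := hA m j hj
        rw [Function.update_self, Function.update_self,
          Function.update_of_ne hj] at h1
        linarith)
      rw [sum_eq] at this
      linarith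
    · have hgap : Δloc k m = μ (kstarm m) m - μ k m := hΔloc m k hk
      have := hAlt (Function.update μ k (Function.update (μ k) m
          (μ k m - (-(Δloc k m))))) (by
        rintro ⟨hA, -⟩
        have h1 := hA m k hk
        rw [Function.update_of_ne (Ne.symm hk), Function.update_self,
          Function.update_self] at h1
        linarith)
      rw [sum_eq] at this
      have hc : (-(Δloc k m)) ^ 2 = (Δloc k m) ^ 2 := by ring
      rw [hc] at this
      linarith
  -- global bound
  have bound2 : ∀ k m, 2 * L ≤ x k m * ((M:ℝ) ^ 2 * (Δglob k) ^ 2) := by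
    intro k m
    by_cases hk : k = kstar
    · obtain ⟨j, hj, hje⟩ := hΔglobStar.1
      subst hk
      have hgap : Δglob k = (1 / (M : ℝ)) * ∑ m, μ k m
          - (1 / (M : ℝ)) * ∑ m, μ j m := by rw [← hje, hΔglob j hj]
      have := hAlt (Function.update μ k (Function.update (μ k) m
          (μ k m - (M:ℝ) * Δglob k))) (by
        rintro ⟨-, hB⟩
        have h1 := hB j hj
        rw [Function.update_self, Function.update_of_ne hj, sumupd] at h1
        have heq : (1 / (M:ℝ)) * ((∑ m', μ k m') - (M:ℝ) * Δglob k)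
            = (1 / (M:ℝ)) * (∑ m', μ k m') - Δglob k := by
          field_simp
        rw [heq] at h1
        linarith)
      rw [sum_eq] at this
      have hc : ((M:ℝ) * Δglob k) ^ 2 = (M:ℝ) ^ 2 * (Δglob k) ^ 2 := by ring
      rw [hc] at this
      linarith
    · have hgap : Δglob k = (1 / (M : ℝ)) * ∑ m, μ kstar m
          - (1 / (M : ℝ)) * ∑ m, μ k m := hΔglob k hk
      have := hAlt (Function.update μ k (Function.update (μ k) m
          (μ k m - (-((M:ℝ) * Δglob k))))) (by
        rintro ⟨-, hB⟩
        have h1 := hB k hk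
        rw [Function.update_of_ne (Ne.symm hk), Function.update_self, sumupd] at h1
        have heq : (1 / (M:ℝ)) * ((∑ m', μ k m') - (-((M:ℝ) * Δglob k)))
            = (1 / (M:ℝ)) * (∑ m', μ k m') + Δglob k := by
          field_simp; ring
        rw [heq] at h1
        linarith)
      rw [sum_eq] at this
      have hc : (-((M:ℝ) * Δglob k)) ^ 2 = (M:ℝ) ^ 2 * (Δglob k) ^ 2 := by ring
      rw [hc] at this
      linarith
  have hmax : ∀ k m, max (2 * L / (Δloc k m) ^ 2)
      (2 * L / ((M : ℝ) ^ 2 * (Δglob k) ^ 2)) ≤ x k m := by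
    intro k m
    apply max_le
    · exact (div_le_iff₀ (pow_pos (hΔlocpos k m) 2)).mpr (bound1 k m)
    · exact (div_le_iff₀ (mul_pos (pow_pos hMpos 2) (pow_pos (hΔglobpos k) 2))).mpr
        (bound2 k m)
  exact ⟨fun k m => hmax k m,
    Finset.sum_le_sum fun k _ => Finset.sum_le_sum fun m _ => hmax k m⟩
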